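/- For positive integers D and t with 1 ≤ t ≤ D−1, the array P_{D,t} of size C(D,t) × D, with rows indexed by t-subsets T of [D] and columns by elements d ∈ [D], whose entry is * if d ∈ T and equal to the lexicographic rank of the (t+1)-subset T ∪ {d} if d ∉ T, is a (t+1)-regular (D, C(D,t), C(D−1,t−1), C(D,t+1)) PDA; i.e., every column has exactly C(D−1,t−1) stars, every integer in [C(D,t+1)] appears exactly t+1 times, and the PDA condition A3 holds. -/

import Mathlib

/-- Algorithm 2: the array `P_{D,t}` with rows indexed by `t`-subsets `T` of `[D]`
and columns by `d ∈ [D]`; the entry is a star (`none`) if `d ∈ T`, and otherwise the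
rank `y (T ∪ {d})` of the `(t+1)`-subset `T ∪ {d}`. -/
def PDT (D t : ℕ) (y : {T' : Finset (Fin D) // T'.card = t + 1} → ℕ) :
    {T : Finset (Fin D) // T.card = t} → Fin D → Option ℕ :=
  fun T d =>
    if hd : d ∈ T.1 then none
    else some (y ⟨insert d T.1, by
      rw [Finset.card_insert_of_notMem hd, T.2]⟩)

lemma PDT_eq_none_iff (D t : ℕ) (y : {T' : Finset (Fin D) // T'.card = t + 1} → ℕ)
    (T : {T : Finset (Fin D) // T.card = t}) (d : Fin D) :
    PDT D t y T d = none ↔ d ∈ T.1 := by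
  unfold PDT; split <;> simp_all

lemma PDT_eq_some (D t : ℕ) (y : {T' : Finset (Fin D) // T'.card = t + 1} → ℕ)
    (T : {T : Finset (Fin D) // T.card = t}) (d : Fin D) (s : ℕ)
    (h : PDT D t y T d = some s) :
    d ∉ T.1 ∧ ∀ (h' : (insert d T.1).card = t + 1), y ⟨insert d T.1, h'⟩ = s := by
  unfold PDT at h; split at h
  · simp at h
  · refine ⟨by assumption, fun h' => ?_⟩
    simpa using h

/-- for `1 ≤ t ≤ D−1` and `y` the lexicographic rank (a bijection from
`(t+1)`-subsets of `[D]` onto `[C(D,t+1)]`), the array `P_{D,t}` is a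
`(t+1)`-regular `(D, C(D,t), C(D−1,t−1), C(D,t+1))` PDA: every column has exactly
`C(D−1,t−1)` stars, every integer in `[C(D,t+1)]` appears exactly `t+1` times, and
condition A3 holds. -/
theorem PDT_is_regular_PDA (D t : ℕ) (ht : 1 ≤ t) (htD : t ≤ D - 1)
    (y : {T' : Finset (Fin D) // T'.card = t + 1} → ℕ)
    (hy_inj : Function.Injective y)
    (hy_range : Set.range y = Set.Icc 1 (D.choose (t + 1))) :
    (∀ d : Fin D,
      (Finset.univ.filter
        (fun T : {T : Finset (Fin D) // T.card = t} => PDT D t y T d = none)).card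
        = (D - 1).choose (t - 1)) ∧
    (∀ s ∈ Finset.Icc 1 (D.choose (t + 1)),
      (Finset.univ.filter
        (fun p : {T : Finset (Fin D) // T.card = t} × Fin D =>
          PDT D t y p.1 p.2 = some s)).card = t + 1) ∧
    (∀ (T₁ T₂ : {T : Finset (Fin D) // T.card = t}) (d₁ d₂ : Fin D) (s : ℕ),
      (T₁, d₁) ≠ (T₂, d₂) →
      PDT D t y T₁ d₁ = some s → PDT D t y T₂ d₂ = some s →
      T₁ ≠ T₂ ∧ d₁ ≠ d₂ ∧ PDT D t y T₁ d₂ = none ∧ PDT D t y T₂ d₁ = none) :=  by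
  have hcard : ∀ (T : {T : Finset (Fin D) // T.card = t}) (d : Fin D) (hd : d ∉ T.1),
      (insert d T.1).card = t + 1 := by
    intro T d hd
    rw [Finset.card_insert_of_notMem hd, T.2]
  refine ⟨?_, ?_, ?_⟩
  · -- column star count
    intro d
    have : (Finset.univ.filter
        (fun T : {T : Finset (Fin D) // T.card = t} => PDT D t y T d = none)).card
        = ((Finset.univ.erase d).powersetCard (t - 1)).card := by
      apply Finset.card_bij (fun T _ => T.1.erase d)
      · intro T hT
        simp only [Finset.mem_filter, PDT_eq_none_iff] at hT
        rw [Finset.mem_powersetCard]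
        constructor
        · exact Finset.erase_subset_erase d (Finset.subset_univ _)
        · rw [Finset.card_erase_of_mem hT.2, T.2]
      · intro T₁ h₁ T₂ h₂ h
        simp only [Finset.mem_filter, PDT_eq_none_iff] at h₁ h₂
        apply Subtype.ext
        rw [← Finset.insert_erase h₁.2, ← Finset.insert_erase h₂.2, h]
      · intro S hS
        rw [Finset.mem_powersetCard] at hS
        have hd : d ∉ S := fun h => (Finset.ne_of_mem_erase (hS.1 h)) rfl
        refine ⟨⟨insert d S, ?_⟩, ?_, ?_⟩
        · rw [Finset.card_insert_of_notMem hd, hS.2]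
          omega
        · simp [Finset.mem_filter, PDT_eq_none_iff]
        · simp [Finset.erase_insert hd]
    rw [this, Finset.card_powersetCard, Finset.card_erase_of_mem (Finset.mem_univ d),
      Finset.card_univ, Fintype.card_fin]
  · -- regularity
    intro s hs
    have hsr : s ∈ Set.range y := by
      rw [hy_range]; simpa using hs
    obtain ⟨T', hT'⟩ := hsr
    have : (Finset.univ.filter
        (fun p : {T : Finset (Fin D) // T.card = t} × Fin D =>
          PDT D t y p.1 p.2 = some s)).card = T'.1.card := by
      apply Finset.card_bij (fun p _ => p.2)
      · intro p hp
        simp only [Finset.mem_filter] at hp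
        obtain ⟨hd, hy⟩ := PDT_eq_some D t y p.1 p.2 s hp.2
        have := hy (hcard p.1 p.2 hd)
        have heq : (⟨insert p.2 p.1.1, hcard p.1 p.2 hd⟩ :
            {T' : Finset (Fin D) // T'.card = t + 1}) = T' := by
          apply hy_inj; rw [this, hT']
        have : insert p.2 p.1.1 = T'.1 := congrArg Subtype.val heq
        rw [← this]; exact Finset.mem_insert_self _ _
      · intro p hp q hq h
        simp only [Finset.mem_filter] at hp hq
        obtain ⟨hdp, hyp⟩ := PDT_eq_some D t y p.1 p.2 s hp.2
        obtain ⟨hdq, hyq⟩ := PDT_eq_some D t y q.1 q.2 s hq.2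
        have h1 := hyp (hcard p.1 p.2 hdp)
        have h2 := hyq (hcard q.1 q.2 hdq)
        have heq : insert p.2 p.1.1 = insert q.2 q.1.1 := by
          have : (⟨insert p.2 p.1.1, hcard p.1 p.2 hdp⟩ :
              {T' : Finset (Fin D) // T'.card = t + 1}) =
              ⟨insert q.2 q.1.1, hcard q.1 q.2 hdq⟩ := by
            apply hy_inj; rw [h1, h2]
          exact congrArg Subtype.val this
        have : p.1.1 = q.1.1 := by
          rw [← Finset.erase_insert hdp, ← Finset.erase_insert hdq, heq, h]
        exact Prod.ext (Subtype.ext this) h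
      · intro d hd
        have hdn : d ∉ T'.1.erase d := Finset.notMem_erase d _
        have hc : (T'.1.erase d).card = t := by
          rw [Finset.card_erase_of_mem hd, T'.2]
          omega
        refine ⟨(⟨T'.1.erase d, hc⟩, d), ?_, rfl⟩
        simp only [Finset.mem_filter, Finset.mem_univ, true_and]
        unfold PDT
        rw [dif_neg hdn]
        congr 1
        rw [← hT']
        congr 1
        exact Subtype.ext (Finset.insert_erase hd)
    rw [this, T'.2]
  · -- A3
    intro T₁ T₂ d₁ d₂ s hne h₁ h₂
    obtain ⟨hd₁, hy₁⟩ := PDT_eq_some D t y T₁ d₁ s h₁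
    obtain ⟨hd₂, hy₂⟩ := PDT_eq_some D t y T₂ d₂ s h₂
    have heq : insert d₁ T₁.1 = insert d₂ T₂.1 := by
      have : (⟨insert d₁ T₁.1, hcard T₁ d₁ hd₁⟩ :
          {T' : Finset (Fin D) // T'.card = t + 1}) =
          ⟨insert d₂ T₂.1, hcard T₂ d₂ hd₂⟩ := by
        apply hy_inj
        rw [hy₁ (hcard T₁ d₁ hd₁), hy₂ (hcard T₂ d₂ hd₂)]
      exact congrArg Subtype.val this
    have hTne : T₁ ≠ T₂ := by
      rintro rfl
      have : d₁ = d₂ := by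
        have : d₁ ∈ insert d₂ T₁.1 := heq ▸ Finset.mem_insert_self d₁ T₁.1
        rcases Finset.mem_insert.1 this with h | h
        · exact h
        · exact absurd h hd₁
      exact hne (by rw [this])
    have hdne : d₁ ≠ d₂ := by
      rintro rfl
      apply hTne
      apply Subtype.ext
      rw [← Finset.erase_insert hd₁, ← Finset.erase_insert hd₂, heq]
    have hm₂ : d₂ ∈ T₁.1 := by
      have : d₂ ∈ insert d₁ T₁.1 := heq ▸ Finset.mem_insert_self d₂ T₂.1
      rcases Finset.mem_insert.1 this with h | h
      · exact absurd h.symm hdne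
      · exact h
    have hm₁ : d₁ ∈ T₂.1 := by
      have : d₁ ∈ insert d₂ T₂.1 := heq ▸ Finset.mem_insert_self d₁ T₁.1
      rcases Finset.mem_insert.1 this with h | h
      · exact absurd h hdne
      · exact h
    exact ⟨hTne, hdne, (PDT_eq_none_iff D t y T₁ d₂).2 hm₂,
      (PDT_eq_none_iff D t y T₂ d₁).2 hm₁⟩
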